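/- For the optimal discrimination measurement π_l = (1/2)(|a⟩ + (−1)^l|b⟩)(⟨a| + (−1)^l⟨b|) applied to equiprobable states |Ψ_l⟩ = (1/√2)[√(1+c)|a⟩ + (−1)^l√(1−c)|b⟩], the mutual information between the measurement outcome and the state label equals 1 − h[(1 + √(1−c²))/2], where h is the binary entropy. -/

import Mathlib

open Real Finset

noncomputable section

/-- Binary entropy (base 2). -/
def binEnt (q : ℝ) : ℝ := -q * logb 2 q - (1 - q) * logb 2 (1 - q)

/-- The states |Ψ_l⟩ = (1/√2)[√(1+c)|a⟩ + (−1)^l √(1−c)|b⟩]. -/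
def Ψ {H : Type*} [NormedAddCommGroup H] [InnerProductSpace ℂ H]
    (a b : H) (c : ℝ) (l : Fin 2) : H :=
  ((Real.sqrt 2 : ℝ) : ℂ)⁻¹ •
    (((Real.sqrt (1 + c) : ℝ) : ℂ) • a +
      ((-1 : ℂ)^(l : ℕ) * ((Real.sqrt (1 - c) : ℝ) : ℂ)) • b)

/-- Joint probability of preparing |Ψ_l⟩ (prob 1/2) and obtaining outcome m of the
POVM π_m = (1/2)|a+(−1)^m b⟩⟨a+(−1)^m b|: p(l,m) = (1/2)·⟨Ψ_l|π_m|Ψ_l⟩. -/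
def jointProb {H : Type*} [NormedAddCommGroup H] [InnerProductSpace ℂ H]
    (a b : H) (c : ℝ) (l m : Fin 2) : ℝ :=
  (1/2) * ((1/2) * ‖(inner ℂ (a + ((-1 : ℂ)^(m : ℕ)) • b) (Ψ a b c l) : ℂ)‖^2)

lemma jointProb_eq {H : Type*} [NormedAddCommGroup H] [InnerProductSpace ℂ H]
    (a b : H) (c : ℝ) (hc : c ∈ Set.Icc (0:ℝ) 1)
    (ha : ‖a‖ = 1) (hb : ‖b‖ = 1) (hab : (inner ℂ a b : ℂ) = 0) (l m : Fin 2) :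
    jointProb a b c l m = (1 + (-1:ℝ)^((l:ℕ)+(m:ℕ)) * Real.sqrt (1 - c^2))/4 := by
  obtain ⟨hc0, hc1⟩ := hc
  have hba : (inner ℂ b a : ℂ) = 0 := by rw [← inner_conj_symm, hab]; simp
  have haa : (inner ℂ a a : ℂ) = 1 := by rw [inner_self_eq_norm_sq_to_K, ha]; norm_num
  have hbb : (inner ℂ b b : ℂ) = 1 := by rw [inner_self_eq_norm_sq_to_K, hb]; norm_num
  have hsm : ∀ (r:ℝ) (x y : H), (inner ℂ x (r • y) : ℂ) = (r:ℂ) * inner ℂ x y := by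
    intro r x y
    rw [← algebraMap_smul ℂ r y, inner_smul_right]
    norm_num
  have h1 : (inner ℂ (a + ((-1 : ℂ)^(m : ℕ)) • b) (Ψ a b c l) : ℂ)
      = (((Real.sqrt 2)⁻¹ * (Real.sqrt (1+c) + (-1:ℝ)^((l:ℕ)+(m:ℕ)) * Real.sqrt (1-c)) : ℝ) : ℂ) := by
    unfold Ψ
    simp [inner_add_left, inner_add_right, inner_smul_left, inner_smul_right,
      hab, hba, haa, hbb, map_pow, hsm, ha, hb]
    push_cast
    ring
  rw [jointProb, h1, Complex.norm_real, Real.norm_eq_abs, sq_abs]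
  have h2 : Real.sqrt (1+c) * Real.sqrt (1-c) = Real.sqrt (1 - c^2) := by
    rw [← Real.sqrt_mul (by linarith)]; ring_nf
  have h3 : Real.sqrt (1+c) ^ 2 = 1 + c := Real.sq_sqrt (by linarith)
  have h4 : Real.sqrt (1-c) ^ 2 = 1 - c := Real.sq_sqrt (by linarith)
  have h5 : ((-1:ℝ)^((l:ℕ)+(m:ℕ)))^2 = 1 := by
    rw [← pow_mul, mul_comm, pow_mul]; norm_num
  have h6 : ((Real.sqrt 2)⁻¹)^2 = 1/2 := by
    rw [inv_pow, Real.sq_sqrt (by norm_num)]; norm_num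
  have expand : ((Real.sqrt 2)⁻¹ * (Real.sqrt (1+c) + (-1:ℝ)^((l:ℕ)+(m:ℕ)) * Real.sqrt (1-c)))^2
      = (Real.sqrt 2)⁻¹^2 * (Real.sqrt (1+c)^2 + 2*((-1:ℝ)^((l:ℕ)+(m:ℕ)))*(Real.sqrt (1+c)*Real.sqrt (1-c))
        + ((-1:ℝ)^((l:ℕ)+(m:ℕ)))^2 * Real.sqrt (1-c)^2) := by ring
  rw [expand, h2, h3, h4, h5, h6]
  ring

/-- the mutual information between outcome and label equals
1 − h[(1+√(1−c²))/2]. -/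
theorem stmt11 {H : Type*} [NormedAddCommGroup H] [InnerProductSpace ℂ H]
    (a b : H) (c : ℝ) (hc : c ∈ Set.Icc (0:ℝ) 1)
    (ha : ‖a‖ = 1) (hb : ‖b‖ = 1) (hab : (inner ℂ a b : ℂ) = 0)
    (HX HY HXY : ℝ)
    (hHX : HX = -∑ l : Fin 2,
      (∑ m : Fin 2, jointProb a b c l m) * logb 2 (∑ m : Fin 2, jointProb a b c l m))
    (hHY : HY = -∑ m : Fin 2,
      (∑ l : Fin 2, jointProb a b c l m) * logb 2 (∑ l : Fin 2, jointProb a b c l m))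
    (hHXY : HXY = -∑ l : Fin 2, ∑ m : Fin 2,
      jointProb a b c l m * logb 2 (jointProb a b c l m)) :
    HX + HY - HXY = 1 - binEnt ((1 + Real.sqrt (1 - c^2)) / 2) := by
  obtain ⟨hc0, hc1⟩ := hc
  set s := Real.sqrt (1 - c^2) with hs
  have hs0 : 0 ≤ s := Real.sqrt_nonneg _
  have hs1 : s ≤ 1 := by
    rw [hs]
    exact Real.sqrt_le_one.mpr (by nlinarith)
  have jp := jointProb_eq a b c ⟨hc0, hc1⟩ ha hb hab
  have jp00 : jointProb a b c 0 0 = (1 + s)/4 := by rw [jp]; norm_num; exact hs.symm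
  have jp01 : jointProb a b c 0 1 = (1 - s)/4 := by rw [jp]; norm_num; ring
  have jp10 : jointProb a b c 1 0 = (1 - s)/4 := by rw [jp]; norm_num; ring
  have jp11 : jointProb a b c 1 1 = (1 + s)/4 := by rw [jp]; norm_num; exact hs.symm
  have Lhalf : logb 2 (1/2) = -1 := by
    rw [show (1/2:ℝ) = 2⁻¹ by norm_num, Real.logb_inv]
    simp [Real.logb_self_eq_one]
  have hHX' : HX = 1 := by
    rw [hHX, Fin.sum_univ_two]
    simp only [Fin.sum_univ_two, jp00, jp01, jp10, jp11]
    have : (1+s)/4 + (1-s)/4 = 1/2 := by ring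
    rw [this, show (1-s)/4 + (1+s)/4 = 1/2 by ring, Lhalf]; ring
  have hHY' : HY = 1 := by
    rw [hHY, Fin.sum_univ_two]
    simp only [Fin.sum_univ_two, jp00, jp01, jp10, jp11]
    rw [show (1+s)/4 + (1-s)/4 = 1/2 by ring, show (1-s)/4 + (1+s)/4 = 1/2 by ring, Lhalf]; ring
  have hHXY' : HXY = -(2*((1+s)/4 * logb 2 ((1+s)/4)) + 2*((1-s)/4 * logb 2 ((1-s)/4))) := by
    rw [hHXY]
    simp only [Fin.sum_univ_two, jp00, jp01, jp10, jp11]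
    ring
  rw [hHX', hHY', hHXY', binEnt]
  have hq0 : (0:ℝ) < (1+s)/4 := by linarith
  have Lu : logb 2 ((1+s)/2) = logb 2 ((1+s)/4) + 1 := by
    rw [show (1+s)/2 = 2 * ((1+s)/4) by ring, Real.logb_mul (by norm_num) (by positivity)]
    simp [Real.logb_self_eq_one]; ring
  have h1q : 1 - (1+s)/2 = (1-s)/2 := by ring
  rw [h1q, Lu]
  rcases eq_or_lt_of_le hs1 with hseq | hslt
  · rw [hseq]
    norm_num
    rw [Lhalf]
    norm_num
  · have hv0 : (0:ℝ) < (1-s)/4 := by linarith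
    have Lv : logb 2 ((1-s)/2) = logb 2 ((1-s)/4) + 1 := by
      rw [show (1-s)/2 = 2 * ((1-s)/4) by ring, Real.logb_mul (by norm_num) (by positivity)]
      simp [Real.logb_self_eq_one]; ring
    rw [Lv]
    ring
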